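/- Let Q = B_∞ = {x ∈ ℝⁿ : ‖x‖_∞ ≤ 1}, p ∈ ℝⁿ, and take the linear regularizer ψ(x) = p·x. Then for every ε ≥ 0, P(ERᶜ(ε)) ≤ ε·‖p‖·√n + ½ε²·‖p‖². -/

import Mathlib

open MeasureTheory Set Metric Pointwise RealInnerProductSpace

noncomputable section

/-- Standard Gaussian measure of a set in `ℝⁿ`. -/
def gauss {n : ℕ} (B : Set (EuclideanSpace ℝ (Fin n))) : ℝ :=
  ∫ x in B, (2 * Real.pi) ^ (-(n : ℝ) / 2) * Real.exp (-‖x‖ ^ 2 / 2)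

/-- Solution set of `P₀(g)`: minimize `-g·x` over `Q`. -/
def sol0 {n : ℕ} (Q : Set (EuclideanSpace ℝ (Fin n))) (g : EuclideanSpace ℝ (Fin n)) :
    Set (EuclideanSpace ℝ (Fin n)) :=
  {x ∈ Q | ∀ y ∈ Q, -⟪g, x⟫ ≤ -⟪g, y⟫}

/-- Solution set of `P_ε(g)`: minimize `-g·x + εψ(x)` over `Q` (here `dom ψ = ℝⁿ`). -/
def solReg {n : ℕ} (Q : Set (EuclideanSpace ℝ (Fin n))) (ψ : EuclideanSpace ℝ (Fin n) → ℝ)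
    (ε : ℝ) (g : EuclideanSpace ℝ (Fin n)) : Set (EuclideanSpace ℝ (Fin n)) :=
  {x ∈ Q | ∀ y ∈ Q, -⟪g, x⟫ + ε * ψ x ≤ -⟪g, y⟫ + ε * ψ y}

/-- The exact regularization event: `P₀(g)` has a unique solution which also solves `P_ε(g)`. -/
def ER {n : ℕ} (Q : Set (EuclideanSpace ℝ (Fin n))) (ψ : EuclideanSpace ℝ (Fin n) → ℝ)
    (ε : ℝ) : Set (EuclideanSpace ℝ (Fin n)) :=
  {g | ∃ z, sol0 Q g = {z} ∧ z ∈ solReg Q ψ ε g}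

/-- The unit `ℓ∞` ball in `ℝⁿ`. -/
def Binf (n : ℕ) : Set (EuclideanSpace ℝ (Fin n)) := {x | ∀ i, |x i| ≤ 1}

lemma innerSumEq {n : ℕ} (u v : EuclideanSpace ℝ (Fin n)) : ⟪u,v⟫ = ∑ i, u i * v i := by
  simp [PiLp.inner_apply, RCLike.inner_apply, conj_trivial]
  exact Finset.sum_congr rfl fun i _ => mul_comm _ _

lemma er_compl_subset {n : ℕ} (p : EuclideanSpace ℝ (Fin n)) (ε : ℝ) :
    (ER (Binf n) (fun x => ⟪p, x⟫) ε)ᶜ ⊆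
      ⋃ i, {g : EuclideanSpace ℝ (Fin n) |
        g i ∈ Icc (min 0 (ε * p i)) (max 0 (ε * p i))} := by
  intro g hg
  by_contra hU
  apply hg
  have hnot : ∀ i, g i ∉ Icc (min 0 (ε * p i)) (max 0 (ε * p i)) := by
    intro i hi
    exact hU (Set.mem_iUnion.2 ⟨i, hi⟩)
  have hne : ∀ i, g i ≠ 0 := by
    intro i h0
    exact hnot i ⟨by rw [h0]; exact min_le_left _ _, by rw [h0]; exact le_max_left _ _⟩
  set z : EuclideanSpace ℝ (Fin n) := WithLp.toLp 2 (fun i => if 0 < g i then (1:ℝ) else -1) with hzdef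
  have hz : ∀ i, (z i = 1 ∧ 0 < g i) ∨ (z i = -1 ∧ g i < 0) := by
    intro i
    rcases (hne i).lt_or_gt with h | h
    · exact Or.inr ⟨if_neg (not_lt.2 h.le), h⟩
    · exact Or.inl ⟨if_pos h, h⟩
  have hzQ : z ∈ Binf n := by
    intro i
    rcases hz i with ⟨h, _⟩ | ⟨h, _⟩ <;> rw [h] <;> norm_num
  have hgz : ∀ i, g i * z i = |g i| := by
    intro i
    rcases hz i with ⟨h, h'⟩ | ⟨h, h'⟩ <;> rw [h] <;>
      [rw [abs_of_pos h']; rw [abs_of_neg h']] <;> ring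
  have hgpz : ∀ i, (g i - ε * p i) * z i = |g i - ε * p i| := by
    intro i
    rcases hz i with ⟨h, h'⟩ | ⟨h, h'⟩
    · have h1 : max 0 (ε * p i) < g i := by
        by_contra hle
        exact hnot i ⟨le_trans (min_le_left _ _) h'.le, not_lt.1 hle⟩
      have h2 : 0 < g i - ε * p i := by
        have := le_max_right 0 (ε * p i); linarith
      rw [h, abs_of_pos h2]; ring
    · have h1 : g i < min 0 (ε * p i) := by
        by_contra hle
        exact hnot i ⟨not_lt.1 hle, le_trans h'.le (le_max_left _ _)⟩
      have h2 : g i - ε * p i < 0 := by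
        have := min_le_right 0 (ε * p i); linarith
      rw [h, abs_of_neg h2]; ring
  have hmax : ∀ (w : Fin n → ℝ), (∀ i, w i * z i = |w i|) →
      ∀ y ∈ Binf n, ∑ i, w i * y i ≤ ∑ i, w i * z i := by
    intro w hw y hy
    refine Finset.sum_le_sum fun i _ => ?_
    calc w i * y i ≤ |w i * y i| := le_abs_self _
      _ = |w i| * |y i| := abs_mul _ _
      _ ≤ |w i| * 1 := mul_le_mul_of_nonneg_left (hy i) (abs_nonneg _)
      _ = w i * z i := by rw [mul_one, hw i]
  refine ⟨z, ?_, ?_⟩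
  · ext x
    simp only [sol0, Set.mem_setOf_eq, Set.mem_singleton_iff]
    constructor
    · rintro ⟨hxQ, hopt⟩
      have hge : ∑ i, g i * z i ≤ ∑ i, g i * x i := by
        have := hopt z hzQ
        rw [innerSumEq, innerSumEq] at this
        linarith
      have hle : ∀ i, g i * x i ≤ g i * z i := by
        intro i
        rw [hgz i]
        calc g i * x i ≤ |g i * x i| := le_abs_self _
          _ = |g i| * |x i| := abs_mul _ _
          _ ≤ |g i| * 1 := mul_le_mul_of_nonneg_left (hxQ i) (abs_nonneg _)
          _ = |g i| := mul_one _
      have heq : ∀ i, g i * x i = g i * z i := by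
        by_contra hcon
        push_neg at hcon
        obtain ⟨i0, hi0⟩ := hcon
        have : ∑ i, g i * x i < ∑ i, g i * z i :=
          Finset.sum_lt_sum (fun i _ => hle i)
            ⟨i0, Finset.mem_univ i0, lt_of_le_of_ne (hle i0) hi0⟩
        linarith
      ext i
      exact mul_left_cancel₀ (hne i) (heq i)
    · rintro rfl
      refine ⟨hzQ, fun y hy => ?_⟩
      rw [innerSumEq, innerSumEq]
      have := hmax g hgz y hy
      linarith
  · refine ⟨hzQ, fun y hy => ?_⟩
    simp only
    have hkey := hmax (fun i => g i - ε * p i) hgpz y hy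
    have expand : ∀ v : EuclideanSpace ℝ (Fin n),
        ∑ i, (g i - ε * p i) * v i = (∑ i, g i * v i) - ε * ∑ i, p i * v i := by
      intro v
      rw [Finset.mul_sum, ← Finset.sum_sub_distrib]
      exact Finset.sum_congr rfl fun i _ => by ring
    rw [expand y, expand z] at hkey
    rw [innerSumEq, innerSumEq, innerSumEq, innerSumEq]
    linarith


def phi (t : ℝ) : ℝ := (2 * Real.pi) ^ (-(1:ℝ)/2) * Real.exp (-t^2/2)

lemma two_pi_pos : (0:ℝ) < 2 * Real.pi := by positivity

lemma phi_nonneg (t : ℝ) : 0 ≤ phi t := by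
  unfold phi; positivity

lemma phi_le_one (t : ℝ) : phi t ≤ 1 := by
  unfold phi
  have h1 : (2 * Real.pi) ^ (-(1:ℝ)/2) ≤ 1 :=
    Real.rpow_le_one_of_one_le_of_nonpos (by nlinarith [Real.pi_gt_three]) (by norm_num)
  have h2 : Real.exp (-t^2/2) ≤ 1 := by
    rw [Real.exp_le_one_iff]; nlinarith [sq_nonneg t]
  nlinarith [Real.exp_pos (-t^2/2), Real.rpow_nonneg (le_of_lt two_pi_pos) (-(1:ℝ)/2)]

lemma phi_eq (t : ℝ) : phi t = (2 * Real.pi) ^ (-(1:ℝ)/2) * Real.exp (-(1/2) * t^2) := by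
  unfold phi; ring_nf

lemma phi_integrable : Integrable phi := by
  have := (integrable_exp_neg_mul_sq (by norm_num : (0:ℝ) < 1/2)).const_mul
    ((2 * Real.pi) ^ (-(1:ℝ)/2))
  exact this.congr (Filter.Eventually.of_forall fun t => (phi_eq t).symm)

lemma phi_integral : ∫ t, phi t = 1 := by
  simp only [phi_eq]
  rw [integral_const_mul, integral_gaussian]
  have h1 : Real.pi / (1/2) = 2 * Real.pi := by ring
  rw [h1, Real.sqrt_eq_rpow, ← Real.rpow_add two_pi_pos]
  norm_num

lemma prod_phi_eq {n : ℕ} (x : EuclideanSpace ℝ (Fin n)) :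
    (2 * Real.pi) ^ (-(n : ℝ) / 2) * Real.exp (-‖x‖ ^ 2 / 2) = ∏ i, phi (x i) := by
  unfold phi
  rw [Finset.prod_mul_distrib, Finset.prod_const, ← Real.exp_sum]
  have hn : ‖x‖^2 = ∑ i, (x i)^2 := by
    rw [EuclideanSpace.norm_eq, Real.sq_sqrt (by positivity)]; simp [sq_abs]
  have hs : ∑ i : Fin n, -(x i)^2/2 = -‖x‖^2/2 := by
    rw [hn, ← Finset.sum_div, ← Finset.sum_neg_distrib]
  have hc : ((2 * Real.pi) ^ (-(1:ℝ)/2)) ^ (Finset.univ : Finset (Fin n)).card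
      = (2 * Real.pi) ^ (-(n : ℝ) / 2) := by
    rw [Finset.card_univ, Fintype.card_fin, ← Real.rpow_natCast ((2 * Real.pi) ^ (-(1:ℝ)/2)) n,
      ← Real.rpow_mul (le_of_lt two_pi_pos)]
    congr 1; ring
  rw [hs, hc]

lemma gauss_strip_bound {n : ℕ} (a b : Fin n → ℝ) (hab : ∀ i, a i ≤ b i)
    {S : Set (EuclideanSpace ℝ (Fin n))}
    (hS : S ⊆ ⋃ i, {g : EuclideanSpace ℝ (Fin n) | g i ∈ Icc (a i) (b i)}) :
    gauss S ≤ ∑ i, (b i - a i) := by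
  set f : EuclideanSpace ℝ (Fin n) → ℝ := fun x => ∏ i, phi (x i) with hfdef
  set F : (Fin n → ℝ) → ℝ := fun y => ∏ i, phi (y i) with hFdef
  set e := (MeasurableEquiv.toLp 2 (Fin n → ℝ)).symm with hedef
  have he := EuclideanSpace.volume_preserving_symm_measurableEquiv_toLp (Fin n)
  have hemb := (MeasurableEquiv.toLp 2 (Fin n → ℝ)).symm.measurableEmbedding
  have hF : Integrable F := Integrable.fintype_prod (f := fun _ : Fin n => phi)
    (fun _ => phi_integrable)
  have hcomp : f = F ∘ ⇑e := rfl
  have hf : Integrable f := by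
    rw [hcomp]; exact (he.integrable_comp_emb hemb).2 hF
  have hfnn : ∀ x, 0 ≤ f x := fun x => Finset.prod_nonneg fun i _ => phi_nonneg _
  set T : Fin n → Set (EuclideanSpace ℝ (Fin n)) :=
    fun i => {g : EuclideanSpace ℝ (Fin n) | g i ∈ Icc (a i) (b i)} with hTdef
  have hmeasEval : ∀ i, Measurable fun g : EuclideanSpace ℝ (Fin n) => g i :=
    fun i => (measurable_pi_apply i).comp e.measurable
  have hTmeas : ∀ i, MeasurableSet (T i) := fun i => (hmeasEval i) measurableSet_Icc
  have hgauss : gauss S = ∫ x in S, f x := by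
    unfold gauss; simp only [prod_phi_eq, hfdef]
  rw [hgauss]
  have step1 : ∫ x in S, f x ≤ ∫ x in ⋃ i, T i, f x :=
    setIntegral_mono_set hf.integrableOn
      (Filter.Eventually.of_forall hfnn) (HasSubset.Subset.eventuallyLE hS)
  have step2 : ∫ x in ⋃ i, T i, f x ≤ ∑ i, ∫ x in T i, f x := by
    rw [← integral_indicator (MeasurableSet.iUnion hTmeas)]
    have hsum : ∀ i : Fin n, Integrable ((T i).indicator f) := fun i =>
      hf.indicator (hTmeas i)
    calc ∫ x, (⋃ i, T i).indicator f x
        ≤ ∫ x, ∑ i, (T i).indicator f x := by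
          apply integral_mono (hf.indicator (MeasurableSet.iUnion hTmeas))
            (integrable_finset_sum _ fun i _ => hsum i)
          intro x
          by_cases hx : x ∈ ⋃ i, T i
          · obtain ⟨i0, hi0⟩ := Set.mem_iUnion.1 hx
            rw [Set.indicator_of_mem hx]
            have : f x = (T i0).indicator f x := (Set.indicator_of_mem hi0 f).symm
            rw [this]
            exact Finset.single_le_sum (fun i _ => Set.indicator_nonneg (fun y _ => hfnn y) x)
              (Finset.mem_univ i0)
          · rw [Set.indicator_of_notMem hx]
            exact Finset.sum_nonneg fun i _ => Set.indicator_nonneg (fun y _ => hfnn y) x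
      _ = ∑ i, ∫ x, (T i).indicator f x := integral_finset_sum _ fun i _ => hsum i
      _ = ∑ i, ∫ x in T i, f x := by
          exact Finset.sum_congr rfl fun i _ => integral_indicator (hTmeas i)
  have step3 : ∀ i, ∫ x in T i, f x ≤ b i - a i := by
    intro i
    have hTpre : T i = ⇑e ⁻¹' {y : Fin n → ℝ | y i ∈ Icc (a i) (b i)} := rfl
    have htrans : ∫ x in T i, f x
        = ∫ y in {y : Fin n → ℝ | y i ∈ Icc (a i) (b i)}, F y := by
      rw [hTpre]
      exact he.setIntegral_preimage_emb hemb F _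
    rw [htrans]
    set ψ : Fin n → ℝ → ℝ :=
      fun j t => if j = i then (Icc (a i) (b i)).indicator phi t else phi t with hψ
    have hTi : MeasurableSet {y : Fin n → ℝ | y i ∈ Icc (a i) (b i)} :=
      (measurable_pi_apply i) measurableSet_Icc
    have hind : ({y : Fin n → ℝ | y i ∈ Icc (a i) (b i)}).indicator F
        = fun y => ∏ j, ψ j (y j) := by
      funext y
      by_cases hy : y i ∈ Icc (a i) (b i)
      · rw [Set.indicator_of_mem (show y ∈ {y : Fin n → ℝ | y i ∈ Icc (a i) (b i)} from hy)]
        refine (Finset.prod_congr rfl fun j _ => ?_).symm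
        by_cases hj : j = i
        · subst hj; simp [hψ, Set.indicator_of_mem hy]
        · simp [hψ, hj]
      · rw [Set.indicator_of_notMem (show y ∉ {y : Fin n → ℝ | y i ∈ Icc (a i) (b i)} from hy)]
        refine (Finset.prod_eq_zero (Finset.mem_univ i) ?_).symm
        simp [hψ, Set.indicator_of_notMem hy]
    rw [← integral_indicator hTi, hind, integral_fintype_prod_volume_eq_prod (𝕜 := ℝ) ψ]
    have hj : ∀ j, ∫ t, ψ j t = if j = i then ∫ t in Icc (a i) (b i), phi t else 1 := by
      intro j
      by_cases h : j = i
      · simp [hψ, h, integral_indicator measurableSet_Icc]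
      · simp [hψ, h, phi_integral]
    rw [Finset.prod_congr rfl fun j _ => hj j, Finset.prod_ite_eq']
    simp only [Finset.mem_univ, if_true]
    calc ∫ t in Icc (a i) (b i), phi t
        ≤ ∫ t in Icc (a i) (b i), (1:ℝ) :=
          setIntegral_mono_on phi_integrable.integrableOn
            (integrableOn_const measure_Icc_lt_top.ne)
            measurableSet_Icc (fun t _ => phi_le_one t)
      _ = b i - a i := by
          simp [Real.volume_Icc, ENNReal.toReal_ofReal (sub_nonneg.2 (hab i)), hab i]
  calc ∫ x in S, f x ≤ ∫ x in ⋃ i, T i, f x := step1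
    _ ≤ ∑ i, ∫ x in T i, f x := step2
    _ ≤ ∑ i, (b i - a i) := Finset.sum_le_sum fun i _ => step3 i


/-- Upper bound on the failure probability of exact regularization for the `ℓ∞` ball with
linear regularization `ψ(x) = p·x`. -/
theorem stmt18 {n : ℕ} (p : EuclideanSpace ℝ (Fin n)) (ε : ℝ) (hε : 0 ≤ ε) :
    gauss (ER (Binf n) (fun x => ⟪p, x⟫) ε)ᶜ ≤
      ε * ‖p‖ * Real.sqrt n + ε ^ 2 * ‖p‖ ^ 2 / 2 := by
  have hab : ∀ i : Fin n, min 0 (ε * p i) ≤ max 0 (ε * p i) := fun i => min_le_max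
  have hmain := gauss_strip_bound (fun i => min 0 (ε * p i)) (fun i => max 0 (ε * p i)) hab
    (er_compl_subset p ε)
  have hdiff : ∀ i : Fin n, max 0 (ε * p i) - min 0 (ε * p i) = ε * |p i| := by
    intro i
    rcases le_total 0 (ε * p i) with h | h
    · rw [max_eq_right h, min_eq_left h, sub_zero, ← abs_of_nonneg h, abs_mul, abs_of_nonneg hε]
    · rw [max_eq_left h, min_eq_right h, zero_sub, ← abs_of_nonpos h, abs_mul, abs_of_nonneg hε]
  have hsum : ∑ i : Fin n, (max 0 (ε * p i) - min 0 (ε * p i)) = ε * ∑ i, |p i| := by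
    rw [Finset.mul_sum]
    exact Finset.sum_congr rfl fun i _ => hdiff i
  have hnorm : ‖p‖ ^ 2 = ∑ i, (p i) ^ 2 := by
    rw [EuclideanSpace.norm_eq, Real.sq_sqrt (by positivity)]
    simp [sq_abs]
  have h1 : (∑ i, |p i|) ^ 2 ≤ (n : ℝ) * ‖p‖ ^ 2 := by
    have := sq_sum_le_card_mul_sum_sq (s := (Finset.univ : Finset (Fin n)))
      (f := fun i => |p i|)
    simp only [Finset.card_univ, Fintype.card_fin, sq_abs] at this
    rw [hnorm]
    exact_mod_cast this
  have h2 : ∑ i, |p i| ≤ Real.sqrt n * ‖p‖ := by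
    calc ∑ i, |p i| = Real.sqrt ((∑ i, |p i|) ^ 2) :=
          (Real.sqrt_sq (Finset.sum_nonneg fun i _ => abs_nonneg _)).symm
      _ ≤ Real.sqrt ((n : ℝ) * ‖p‖ ^ 2) := Real.sqrt_le_sqrt h1
      _ = Real.sqrt n * ‖p‖ := by
          rw [Real.sqrt_mul (Nat.cast_nonneg n), Real.sqrt_sq (norm_nonneg p)]
  have h3 : 0 ≤ ε ^ 2 * ‖p‖ ^ 2 / 2 := by positivity
  calc gauss (ER (Binf n) (fun x => ⟪p, x⟫) ε)ᶜ
      ≤ ∑ i : Fin n, (max 0 (ε * p i) - min 0 (ε * p i)) := hmain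
    _ = ε * ∑ i, |p i| := hsum
    _ ≤ ε * (Real.sqrt n * ‖p‖) := mul_le_mul_of_nonneg_left h2 hε
    _ ≤ ε * ‖p‖ * Real.sqrt n + ε ^ 2 * ‖p‖ ^ 2 / 2 := by nlinarith
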